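/- Let (a_n) be a sequence in [0,2] and define f : [0,2] → [0,2] by f(x) = sup of all finite sums 2^{-n_1} + ⋯ + 2^{-n_k} over finite sets {n_1 < ⋯ < n_k} ⊆ ℕ with max(a_{n_1}, …, a_{n_k}) < x (with f(x) = 0 if no such set exists). Then f is monotone, and for every n, if a_n ≤ f(a_n) then a_n + 2^{-n} ≤ f(a_n + 2^{-n}). -/
import Mathlib

open Finset in
lemma aux_sum_le_two (F : Finset ℕ) : ∑ n ∈ F, (1 / 2 : ℝ) ^ n ≤ 2 := by
  calc ∑ n ∈ F, (1 / 2 : ℝ) ^ n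
      ≤ ∑ n ∈ range (F.sup id + 1), (1 / 2 : ℝ) ^ n := by
        apply Finset.sum_le_sum_of_subset_of_nonneg
        · intro n hn
          exact mem_range.2 (Nat.lt_succ_of_le (Finset.le_sup (f := id) hn))
        · intro i _ _; positivity
    _ ≤ 2 := sum_geometric_two_le _

open Finset in
/-- The Knaster–Tarski style map from the proof that order-complete reals are
sequence-avoiding: `f x` is the supremum of the sums `2^{-n₁} + ⋯ + 2^{-nₖ}`
over nonempty finite sets of indices whose terms all lie below `x`
(`0` if there is no such set, via `sSup ∅ = 0`). -/
theorem monotone_and_postfixed_step (a : ℕ → ℝ) (ha : ∀ n, a n ∈ Set.Icc (0 : ℝ) 2)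
    (f : ℝ → ℝ)
    (hf : ∀ x, f x = sSup {s : ℝ | ∃ F : Finset ℕ, F.Nonempty ∧
        (∀ n ∈ F, a n < x) ∧ s = ∑ n ∈ F, (1 / 2 : ℝ) ^ n}) :
    Monotone f ∧
    ∀ n : ℕ, a n ≤ f (a n) →
      a n + (1 / 2 : ℝ) ^ n ≤ f (a n + (1 / 2 : ℝ) ^ n) := by
  set S : ℝ → Set ℝ := fun x => {s : ℝ | ∃ F : Finset ℕ, F.Nonempty ∧
      (∀ n ∈ F, a n < x) ∧ s = ∑ n ∈ F, (1 / 2 : ℝ) ^ n} with hS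
  have hf' : ∀ x, f x = sSup (S x) := hf
  have hbdd : ∀ x, BddAbove (S x) := by
    intro x
    refine ⟨2, fun s hs => ?_⟩
    obtain ⟨F, -, -, rfl⟩ := hs
    exact aux_sum_le_two F
  have hnonneg : ∀ x, 0 ≤ f x := by
    intro x
    rw [hf]
    apply Real.sSup_nonneg
    rintro s ⟨F, -, -, rfl⟩
    positivity
  constructor
  · intro x y hxy
    rcases eq_or_ne (S x) ∅ with hx | hx
    · rw [hf' x, hx, Real.sSup_empty]
      exact hnonneg y
    · rw [hf' x, hf' y]
      apply csSup_le_csSup (hbdd y) (Set.nonempty_iff_ne_empty.2 hx)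
      rintro s ⟨F, hF, hlt, rfl⟩
      exact ⟨F, hF, fun n hn => lt_of_lt_of_le (hlt n hn) hxy, rfl⟩
  · intro n hn
    have hpos : (0:ℝ) < (1/2:ℝ)^n := by positivity
    rcases eq_or_ne (S (a n)) ∅ with hx | hx
    · have h0 : f (a n) = 0 := by rw [hf', hx, Real.sSup_empty]
      have han : a n = 0 := le_antisymm (h0 ▸ hn) (ha n).1
      have : (1/2:ℝ)^n ∈ S (a n + (1/2:ℝ)^n) := by
        refine ⟨{n}, Finset.singleton_nonempty n, ?_, by simp⟩
        intro m hm
        rw [Finset.mem_singleton] at hm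
        subst hm
        linarith
      have := le_csSup (hbdd _) this
      rw [hf']
      linarith
    · have hne : (S (a n)).Nonempty := Set.nonempty_iff_ne_empty.2 hx
      have key : f (a n) + (1/2:ℝ)^n ≤ f (a n + (1/2:ℝ)^n) := by
        rw [hf' (a n), hf' (a n + (1/2:ℝ)^n)]
        have h : sSup (S (a n)) ≤ sSup (S (a n + (1/2:ℝ)^n)) - (1/2:ℝ)^n := by
          apply csSup_le hne
          rintro s ⟨F, hF, hlt, rfl⟩
          rw [le_sub_iff_add_le']
          have hnF : n ∉ F := fun h => lt_irrefl _ (hlt n h)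
          have hmem : (1/2:ℝ)^n + ∑ m ∈ F, (1/2:ℝ)^m ∈ S (a n + (1/2:ℝ)^n) := by
            refine ⟨insert n F, Finset.insert_nonempty n F, ?_, ?_⟩
            · intro m hm
              rcases Finset.mem_insert.1 hm with rfl | hm
              · linarith
              · exact lt_of_lt_of_le (hlt m hm) (by linarith)
            · rw [Finset.sum_insert hnF]
          exact le_csSup (hbdd _) hmem
        linarith
      linarith
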